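/- Let (X,d) be a metric space with |X| ≥ n and 2 ≤ m < n. If T : X → X is a mapping contracting total pairwise distance on m points with constant α ∈ [0,1), then T is a mapping contracting total pairwise distance on n points with the same constant α. -/

import Mathlib

noncomputable def totalS {X : Type*} [MetricSpace X] {n : ℕ} (x : Fin n → X) : ℝ :=
  ∑ i : Fin n, ∑ j ∈ Finset.Ioi i, dist (x i) (x j)

lemma totalS_eq_pairs {X : Type*} [MetricSpace X] {n : ℕ} (x : Fin n → X) :
    totalS x = ∑ p ∈ (Finset.univ ×ˢ Finset.univ : Finset (Fin n × Fin n)).filter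
        (fun p => p.1 < p.2), dist (x p.1) (x p.2) := by
  rw [totalS, Finset.sum_filter, Finset.sum_product]
  refine Finset.sum_congr rfl fun i _ => ?_
  rw [← Finset.sum_filter]
  congr 1
  ext j
  simp

lemma totalS_sub {X : Type*} [MetricSpace X] {n m : ℕ} (x : Fin n → X)
    (s : Finset (Fin n)) (hs : s.card = m) :
    totalS (x ∘ s.orderEmbOfFin hs) =
      ∑ p ∈ (s ×ˢ s).filter (fun p => p.1 < p.2), dist (x p.1) (x p.2) := by
  rw [totalS_eq_pairs]
  refine Finset.sum_bij (fun p _ => (s.orderEmbOfFin hs p.1, s.orderEmbOfFin hs p.2))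
    ?_ ?_ ?_ ?_
  · intro p hp
    simp only [Finset.mem_filter, Finset.mem_product] at hp ⊢
    exact ⟨⟨s.orderEmbOfFin_mem hs p.1, s.orderEmbOfFin_mem hs p.2⟩,
      (s.orderEmbOfFin hs).strictMono hp.2⟩
  · intro p hp q hq h
    simp only [Prod.mk.injEq] at h
    exact Prod.ext ((s.orderEmbOfFin hs).injective h.1) ((s.orderEmbOfFin hs).injective h.2)
  · intro p hp
    simp only [Finset.mem_filter, Finset.mem_product] at hp
    obtain ⟨i, hi⟩ := (by rw [Finset.range_orderEmbOfFin]; exact hp.1.1 :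
      p.1 ∈ Set.range (s.orderEmbOfFin hs))
    obtain ⟨j, hj⟩ := (by rw [Finset.range_orderEmbOfFin]; exact hp.1.2 :
      p.2 ∈ Set.range (s.orderEmbOfFin hs))
    refine ⟨(i, j), ?_, ?_⟩
    · simp only [Finset.mem_filter, Finset.mem_product, Finset.mem_univ, true_and]
      exact (s.orderEmbOfFin hs).strictMono.lt_iff_lt.mp (by rw [hi, hj]; exact hp.2)
    · simp [hi, hj]
  · intro p hp
    rfl

lemma count_pairs {n m : ℕ} (hm : 2 ≤ m) (a b : Fin n) (hab : a ≠ b) :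
    (((Finset.univ : Finset (Fin n)).powersetCard m).filter
      (fun s => a ∈ s ∧ b ∈ s)).card = (n - 2).choose (m - 2) := by
  have hcard : ((Finset.univ : Finset (Fin n)) \ {a, b}).card = n - 2 := by
    rw [Finset.card_sdiff_of_subset (Finset.subset_univ _), Finset.card_univ, Fintype.card_fin,
      Finset.card_insert_of_notMem (by simpa using hab), Finset.card_singleton]
  rw [← hcard, ← Finset.card_powersetCard]
  apply Finset.card_nbij' (i := fun s => s \ {a, b}) (j := fun t => t ∪ {a, b})
  · intro s hs
    simp only [Finset.mem_coe, Finset.mem_filter, Finset.mem_powersetCard] at hs ⊢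
    refine ⟨Finset.sdiff_subset_sdiff hs.1.1 le_rfl, ?_⟩
    rw [Finset.card_sdiff_of_subset (by simp [Finset.insert_subset_iff, hs.2.1, hs.2.2]), hs.1.2,
      Finset.card_insert_of_notMem (by simpa using hab), Finset.card_singleton]
  · intro t ht
    simp only [Finset.mem_coe, Finset.mem_powersetCard, Finset.mem_filter] at ht ⊢
    have hd : Disjoint t ({a, b} : Finset (Fin n)) := by
      refine Finset.disjoint_left.mpr fun x hx hx' => ?_
      have := ht.1 hx
      simp only [Finset.mem_sdiff] at this
      exact this.2 hx'
    refine ⟨⟨Finset.subset_univ _, ?_⟩, ?_, ?_⟩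
    · rw [Finset.card_union_of_disjoint hd, ht.2,
        Finset.card_insert_of_notMem (by simpa using hab), Finset.card_singleton]
      omega
    · simp
    · simp
  · intro s hs
    simp only [Finset.mem_coe, Finset.mem_filter] at hs
    dsimp only
    rw [Finset.sdiff_union_self_eq_union]
    exact Finset.union_eq_left.mpr (by simp [Finset.insert_subset_iff, hs.2.1, hs.2.2])
  · intro t ht
    simp only [Finset.mem_coe, Finset.mem_powersetCard] at ht
    dsimp only
    rw [Finset.union_sdiff_right]
    exact Finset.sdiff_eq_self_of_disjoint (Finset.disjoint_left.mpr fun x hx hx' =>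
      (Finset.mem_sdiff.mp (ht.1 hx)).2 hx')

lemma key_sum {X : Type*} [MetricSpace X] {n m : ℕ} (hm : 2 ≤ m) (y : Fin n → X) :
    ∑ s ∈ (Finset.univ : Finset (Fin n)).powersetCard m,
      (∑ p ∈ (s ×ˢ s).filter (fun p => p.1 < p.2), dist (y p.1) (y p.2))
    = ((n - 2).choose (m - 2) : ℝ) * totalS y := by
  set U := (Finset.univ ×ˢ Finset.univ : Finset (Fin n × Fin n)).filter
      (fun p => p.1 < p.2) with hU
  have h1 : ∀ s : Finset (Fin n),
      (s ×ˢ s).filter (fun p => p.1 < p.2)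
        = U.filter (fun p => p.1 ∈ s ∧ p.2 ∈ s) := by
    intro s
    ext p
    simp only [Finset.mem_filter, Finset.mem_product, Finset.mem_univ, true_and, hU]
    tauto
  calc ∑ s ∈ (Finset.univ : Finset (Fin n)).powersetCard m,
        (∑ p ∈ (s ×ˢ s).filter (fun p => p.1 < p.2), dist (y p.1) (y p.2))
      = ∑ s ∈ (Finset.univ : Finset (Fin n)).powersetCard m,
        ∑ p ∈ U, if p.1 ∈ s ∧ p.2 ∈ s then dist (y p.1) (y p.2) else 0 := by
        refine Finset.sum_congr rfl fun s _ => ?_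
        rw [h1 s, Finset.sum_filter]
    _ = ∑ p ∈ U, ∑ s ∈ (Finset.univ : Finset (Fin n)).powersetCard m,
        (if p.1 ∈ s ∧ p.2 ∈ s then dist (y p.1) (y p.2) else 0) := Finset.sum_comm
    _ = ∑ p ∈ U, ((n - 2).choose (m - 2) : ℝ) * dist (y p.1) (y p.2) := by
        refine Finset.sum_congr rfl fun p hp => ?_
        have hne : p.1 ≠ p.2 := by
          simp only [hU, Finset.mem_filter] at hp
          exact ne_of_lt hp.2
        rw [← Finset.sum_filter, Finset.sum_const, count_pairs hm p.1 p.2 hne,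
          nsmul_eq_mul]
    _ = ((n - 2).choose (m - 2) : ℝ) * totalS y := by
        rw [← Finset.mul_sum, totalS_eq_pairs]

theorem stmt_1 {X : Type*} [MetricSpace X] (m n : ℕ) (hm : 2 ≤ m) (hmn : m < n)
    (hcard : ∃ f : Fin n → X, Function.Injective f)
    (T : X → X) (α : ℝ) (hα0 : 0 ≤ α) (hα1 : α < 1)
    (hT : ∀ x : Fin m → X, Function.Injective x → totalS (T ∘ x) ≤ α * totalS x) :
    ∀ x : Fin n → X, Function.Injective x → totalS (T ∘ x) ≤ α * totalS x := by
  intro x hx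
  have hC : 0 < ((n - 2).choose (m - 2) : ℝ) := by
    have : m - 2 ≤ n - 2 := by omega
    exact_mod_cast Nat.choose_pos this
  have main : ((n - 2).choose (m - 2) : ℝ) * totalS (T ∘ x) ≤
      ((n - 2).choose (m - 2) : ℝ) * (α * totalS x) := by
    rw [← key_sum hm (T ∘ x)]
    have hr : ((n - 2).choose (m - 2) : ℝ) * (α * totalS x)
        = α * (((n - 2).choose (m - 2) : ℝ) * totalS x) := by ring
    rw [hr, ← key_sum hm x, Finset.mul_sum]
    refine Finset.sum_le_sum fun s hs => ?_
    have hsc : s.card = m := (Finset.mem_powersetCard_univ.mp hs)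
    rw [← totalS_sub (T ∘ x) s hsc, ← totalS_sub x s hsc]
    have : (T ∘ x) ∘ s.orderEmbOfFin hsc = T ∘ (x ∘ s.orderEmbOfFin hsc) := rfl
    rw [this]
    exact hT _ (hx.comp (s.orderEmbOfFin hsc).injective)
  exact (mul_le_mul_iff_right₀ hC).mp main
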